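/- Let T be the rooted tree consisting of all finite sequences of the form 0ⁿ1ᵐ (n zeros followed by m ones, n, m ∈ ℕ), with root the empty sequence and equipped with the tree metric. Then σ(T, root), the set of σ-equivalence classes of coarse sequences in (T, root), is countably infinite (it has cardinality ℵ₀). -/

import Mathlib

open Filter

/-- The length of the longest common prefix of two lists. -/
def commonPrefixLen : List ℕ → List ℕ → ℕ
  | a :: s, b :: t => if a = b then commonPrefixLen s t + 1 else 0
  | _, _ => 0

/-- The tree metric on finite sequences: `d(s,t) = |s| + |t| - 2ℓ` where `ℓ` is the
length of the longest common prefix of `s` and `t`. -/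
def treeDist (s t : List ℕ) : ℕ :=
  s.length + t.length - 2 * commonPrefixLen s t

/-- A rooted tree: a set of finite sequences containing the empty sequence and
closed under prefixes. -/
def IsTree (T : Set (List ℕ)) : Prop :=
  [] ∈ T ∧ ∀ l ∈ T, ∀ l' : List ℕ, l' <+: l → l' ∈ T

/-- A tree is finitely branching if every node has only finitely many one-step
extensions in the tree. -/
def FinitelyBranching (T : Set (List ℕ)) : Prop :=
  ∀ l ∈ T, {n : ℕ | l ++ [n] ∈ T}.Finite

/-- `[T]`: the set of infinite branches of `T`. -/
def Branch (T : Set (List ℕ)) :=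
  {f : ℕ → ℕ // ∀ n : ℕ, (List.ofFn fun i : Fin n => f i.1) ∈ T}

/-- A coarse sequence in the pointed metric space `(T, root)`: a sequence of nodes of
`T` with uniformly bounded consecutive steps that diverges from the root to infinity. -/
def IsCoarseSeqT (T : Set (List ℕ)) (s : ℕ → List ℕ) : Prop :=
  (∀ i : ℕ, s i ∈ T) ∧
  (∃ K : ℝ, ∀ i : ℕ, (treeDist (s i) (s (i + 1)) : ℝ) ≤ K) ∧
  Tendsto (fun i => treeDist [] (s i)) atTop atTop

/-- `s` is a subsequence of `t`. -/
def IsSubseq {X : Type*} (s t : ℕ → X) : Prop :=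
  ∃ k : ℕ → ℕ, StrictMono k ∧ ∀ i, s i = t (k i)

/-- σ-equivalence of coarse sequences in `(T, root)`. -/
def SigmaRelT (T : Set (List ℕ)) (s t : ℕ → List ℕ) : Prop :=
  ∃ (n : ℕ) (u : ℕ → ℕ → List ℕ), u 0 = s ∧ u n = t ∧ (∀ i ≤ n, IsCoarseSeqT T (u i)) ∧
    ∀ i < n, IsSubseq (u i) (u (i + 1)) ∨ IsSubseq (u (i + 1)) (u i)

/-- `x` and `y` are connected inside `A` by a finite chain with steps of tree
distance `≤ K`. -/
def ChainT (K : ℝ) (A : Set (List ℕ)) (x y : List ℕ) : Prop :=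
  ∃ (n : ℕ) (c : ℕ → List ℕ), c 0 = x ∧ c n = y ∧ (∀ i ≤ n, c i ∈ A) ∧
    ∀ i < n, (treeDist (c i) (c (i + 1)) : ℝ) ≤ K

/-- ε-equivalence of coarse sequences in `(T, root)`: there is `K > 0` such that for
every `r > 0` there is `N` with the tails of `s` and `t` lying in the same
`K`-connected component of `T \ {x : d(root, x) ≤ r}`. -/
def EpsRelT (T : Set (List ℕ)) (s t : ℕ → List ℕ) : Prop :=
  ∃ K > (0 : ℝ), ∀ r > (0 : ℝ), ∃ N : ℕ,
    ∀ x ∈ (s '' {i | N ≤ i}) ∪ (t '' {i | N ≤ i}),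
    ∀ y ∈ (s '' {i | N ≤ i}) ∪ (t '' {i | N ≤ i}),
      ChainT K {l : List ℕ | l ∈ T ∧ r < (treeDist [] l : ℝ)} x y

/-- The set of coarse sequences in `(T, root)`. -/
def CoarseSeqT (T : Set (List ℕ)) := {s : ℕ → List ℕ // IsCoarseSeqT T s}

/-- `σ(T, root)`: the quotient of the set of coarse sequences by σ-equivalence. -/
def SigmaQuotT (T : Set (List ℕ)) :=
  Quot (fun s t : CoarseSeqT T => SigmaRelT T s.1 t.1)

/-- `ε(T, root)`: the quotient of the set of coarse sequences by ε-equivalence. -/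
def EpsQuotT (T : Set (List ℕ)) :=
  Quot (fun s t : CoarseSeqT T => EpsRelT T s.1 t.1)

def node (a b : ℕ) : List ℕ := List.replicate a 0 ++ List.replicate b 1

lemma cpl_nil_left (t : List ℕ) : commonPrefixLen [] t = 0 := by
  cases t <;> rfl

lemma cpl_nil_right (s : List ℕ) : commonPrefixLen s [] = 0 := by
  cases s <;> rfl

lemma cpl_cons (x : ℕ) (s t : List ℕ) :
    commonPrefixLen (x :: s) (x :: t) = commonPrefixLen s t + 1 := by
  simp [commonPrefixLen]

lemma cpl_cons_ne {x y : ℕ} (h : x ≠ y) (s t : List ℕ) :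
    commonPrefixLen (x :: s) (y :: t) = 0 := by
  simp [commonPrefixLen, h]

lemma cpl_replicate (a x : ℕ) (s t : List ℕ) :
    commonPrefixLen (List.replicate a x ++ s) (List.replicate a x ++ t)
      = a + commonPrefixLen s t := by
  induction a with
  | zero => simp
  | succ n ih => simp [List.replicate_succ, cpl_cons, ih]; omega

lemma cpl_ones (b b' : ℕ) :
    commonPrefixLen (List.replicate b 1) (List.replicate b' 1) = min b b' := by
  induction b generalizing b' with
  | zero => simp [cpl_nil_left]
  | succ n ih =>
    cases b' with
    | zero => simp [cpl_nil_right]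
    | succ m => simp [List.replicate_succ, cpl_cons, ih]

lemma cpl_node_same (a b b' : ℕ) :
    commonPrefixLen (node a b) (node a b') = a + min b b' := by
  simp [node, cpl_replicate, cpl_ones]

lemma cpl_node_lt {a a' : ℕ} (h : a < a') (b b' : ℕ) :
    commonPrefixLen (node a b) (node a' b') = a := by
  have : node a' b' = List.replicate a 0 ++ (0 :: (List.replicate (a' - a - 1) 0 ++ List.replicate b' 1)) := by
    simp [node]
    rw [show a' = a + (a' - a) by omega, List.replicate_add]
    rw [show a' - a = (a' - a - 1) + 1 by omega, List.replicate_succ]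
    simp
  rw [this, node, cpl_replicate]
  cases b with
  | zero => simp [cpl_nil_left]
  | succ m => rw [List.replicate_succ, cpl_cons_ne (by omega)]; omega

lemma cpl_comm (s t : List ℕ) : commonPrefixLen s t = commonPrefixLen t s := by
  induction s generalizing t with
  | nil => simp [cpl_nil_left, cpl_nil_right]
  | cons x s ih =>
    cases t with
    | nil => simp [cpl_nil_left, cpl_nil_right]
    | cons y t =>
      by_cases h : x = y
      · subst h; simp [cpl_cons, ih]
      · rw [cpl_cons_ne h, cpl_cons_ne (Ne.symm h)]

lemma node_length (a b : ℕ) : (node a b).length = a + b := by simp [node]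

lemma treeDist_node (a b a' b' : ℕ) :
    treeDist (node a b) (node a' b') =
      if a = a' then (b - b') + (b' - b) else (b + b') + ((a - a') + (a' - a)) := by
  rcases lt_trichotomy a a' with h | h | h
  · rw [treeDist, node_length, node_length, cpl_node_lt h, if_neg (by omega)]; omega
  · subst h
    rw [treeDist, node_length, node_length, cpl_node_same, if_pos rfl]
    rcases Nat.le_total b b' with hb | hb
    · rw [min_eq_left hb]; omega
    · rw [min_eq_right hb]; omega
  · rw [treeDist, node_length, node_length, cpl_comm, cpl_node_lt h, if_neg (by omega)]; omega

lemma treeDist_nil (l : List ℕ) : treeDist [] l = l.length := by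
  rw [treeDist, cpl_nil_left]; simp

lemma node_inj {a b a' b' : ℕ} (h : node a b = node a' b') : a = a' ∧ b = b' := by
  have hd : treeDist (node a b) (node a' b') = 0 := by
    rw [h, treeDist_node]; simp
  rw [treeDist_node] at hd
  by_cases hc : a = a'
  · rw [if_pos hc] at hd
    constructor; exact hc
    have hl := congrArg List.length h
    rw [node_length, node_length] at hl; omega
  · rw [if_neg hc] at hd; omega
def combT : Set (List ℕ) :=
  {l : List ℕ | ∃ n m : ℕ, l = List.replicate n 0 ++ List.replicate m 1}

lemma node_mem (a b : ℕ) : node a b ∈ combT := ⟨a, b, rfl⟩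

lemma mem_combT {l : List ℕ} (h : l ∈ combT) : ∃ a b : ℕ, l = node a b := h

def toothSeq (n : ℕ) : ℕ → List ℕ := fun i => node n i
def spineSeq : ℕ → List ℕ := fun i => node i 0

lemma toothSeq_coarse (n : ℕ) : IsCoarseSeqT combT (toothSeq n) := by
  refine ⟨fun i => node_mem n i, ⟨1, fun i => ?_⟩, ?_⟩
  · have : treeDist (node n i) (node n (i+1)) = 1 := by rw [treeDist_node]; simp
    simp [toothSeq, this]
  · apply tendsto_atTop_mono (f := id)
    · intro i; simp only [toothSeq, treeDist_nil, node_length, id]; omega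
    · exact tendsto_id

lemma spineSeq_coarse : IsCoarseSeqT combT spineSeq := by
  refine ⟨fun i => node_mem i 0, ⟨1, fun i => ?_⟩, ?_⟩
  · have : treeDist (node i 0) (node (i+1) 0) = 1 := by
      rw [treeDist_node, if_neg (by omega)]; omega
    simp [spineSeq, this]
  · apply tendsto_atTop_mono (f := id)
    · intro i; simp [spineSeq, treeDist_nil, node_length]
    · exact tendsto_id

/-- The eventual-tooth invariant. -/
def Pn (n : ℕ) (s : ℕ → List ℕ) : Prop :=
  ∃ N : ℕ, ∀ i ≥ N, ∃ b : ℕ, 1 ≤ b ∧ s i = node n b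

lemma treeDist_comm (s t : List ℕ) : treeDist s t = treeDist t s := by
  rw [treeDist, treeDist, cpl_comm]; omega

lemma step_lemma {a b n c K : ℕ} (hd : treeDist (node a b) (node n c) ≤ K)
    (hc : K + 1 ≤ c) (hdepth : n + K + 1 ≤ a + b) : a = n := by
  rw [treeDist_node] at hd
  by_cases h : a = n
  · exact h
  · rw [if_neg h] at hd; omega

/-- natural number step bound for a coarse sequence -/
lemma coarse_nat_bound {T : Set (List ℕ)} {s : ℕ → List ℕ} (hs : IsCoarseSeqT T s) :
    ∃ K : ℕ, ∀ i, treeDist (s i) (s (i + 1)) ≤ K := by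
  obtain ⟨Kr, hK⟩ := hs.2.1
  refine ⟨⌈Kr⌉₊, fun i => ?_⟩
  have h1 := hK i
  have h2 : (Kr : ℝ) ≤ (⌈Kr⌉₊ : ℝ) := Nat.le_ceil Kr
  exact_mod_cast le_trans h1 h2

lemma coarse_depth {s : ℕ → List ℕ} (hs : IsCoarseSeqT combT s) (R : ℕ) :
    ∃ N, ∀ i ≥ N, R ≤ (s i).length := by
  have := (tendsto_atTop.mp hs.2.2) R
  obtain ⟨N, hN⟩ := eventually_atTop.mp this
  exact ⟨N, fun i hi => by have := hN i hi; rwa [treeDist_nil] at this⟩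

/-- Pn is preserved when passing to a coarse supersequence. -/
lemma Pn_supseq {n : ℕ} {s t : ℕ → List ℕ} (hs : IsCoarseSeqT combT s)
    (ht : IsCoarseSeqT combT t) (hsub : IsSubseq s t) (hP : Pn n s) : Pn n t := by
  obtain ⟨K, hK⟩ := coarse_nat_bound ht
  obtain ⟨N₁, hN₁⟩ := coarse_depth ht (n + K + 1)
  obtain ⟨N₂, hN₂⟩ := hP
  obtain ⟨N₃, hN₃⟩ := coarse_depth hs (n + K + 1)
  obtain ⟨k, hk, hks⟩ := hsub
  set i₀ := max N₁ (max N₂ N₃) with hi₀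
  have hki : ∀ i, i ≤ k i := fun i => hk.le_apply
  -- s i₀ is deep on tooth n
  obtain ⟨b₀, hb₀, hsb₀⟩ := hN₂ i₀ (by omega)
  have hdepth₀ : n + K + 1 ≤ (s i₀).length := hN₃ i₀ (by omega)
  have hc₀ : K + 1 ≤ b₀ := by
    rw [hsb₀, node_length] at hdepth₀; omega
  -- propagate along t from k i₀
  have main : ∀ j, k i₀ ≤ j → ∃ c, K + 1 ≤ c ∧ t j = node n c := by
    intro j hj
    induction j with
    | zero =>
      have : k i₀ = 0 := by omega
      refine ⟨b₀, hc₀, ?_⟩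
      rw [← this, ← hks i₀, hsb₀]
    | succ m ih =>
      rcases Nat.lt_or_ge m (k i₀) with hm | hm
      · -- m + 1 = k i₀
        have : k i₀ = m + 1 := by omega
        refine ⟨b₀, hc₀, ?_⟩
        rw [← this, ← hks i₀, hsb₀]
      · obtain ⟨c, hc, htm⟩ := ih hm
        obtain ⟨a', b', hab⟩ := mem_combT (ht.1 (m+1))
        have hdist : treeDist (t (m+1)) (t m) ≤ K := by
          rw [treeDist_comm]; exact hK m
        have hdep : n + K + 1 ≤ (t (m+1)).length := by
          apply hN₁; have := hki i₀; omega
        rw [hab, node_length] at hdep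
        rw [hab, htm] at hdist
        have ha' : a' = n := step_lemma hdist hc hdep
        subst ha'
        refine ⟨b', ?_, hab⟩
        rw [treeDist_node, if_pos rfl] at hdist
        omega
  refine ⟨k i₀, fun j hj => ?_⟩
  obtain ⟨c, hc, htj⟩ := main j hj
  exact ⟨c, by omega, htj⟩

/-- Pn is preserved when passing to a coarse subsequence. -/
lemma Pn_subseq {n : ℕ} {s t : ℕ → List ℕ} (hsub : IsSubseq t s) (hP : Pn n s) : Pn n t := by
  obtain ⟨N, hN⟩ := hP
  obtain ⟨k, hk, hks⟩ := hsub
  refine ⟨N, fun i hi => ?_⟩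
  rw [hks i]
  exact hN (k i) (le_trans hi hk.le_apply)

lemma Pn_sigmaRel {n : ℕ} {s t : ℕ → List ℕ} (h : SigmaRelT combT s t) :
    (Pn n s ↔ Pn n t) := by
  obtain ⟨m, u, hu0, hum, hcoarse, hadj⟩ := h
  have main : ∀ i ≤ m, (Pn n (u 0) ↔ Pn n (u i)) := by
    intro i hi
    induction i with
    | zero => rfl
    | succ j ih =>
      refine (ih (by omega)).trans ?_
      rcases hadj j (by omega) with hsub | hsub
      · exact ⟨Pn_supseq (hcoarse j (by omega)) (hcoarse (j+1) (by omega)) hsub,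
          Pn_subseq hsub⟩
      · exact ⟨Pn_subseq hsub,
          Pn_supseq (hcoarse (j+1) (by omega)) (hcoarse j (by omega)) hsub⟩
  rw [← hu0, ← hum]
  exact main m le_rfl

lemma Pn_toothSeq (n : ℕ) : Pn n (toothSeq n) :=
  ⟨1, fun i hi => ⟨i, hi, rfl⟩⟩

lemma Pn_toothSeq_iff {n m : ℕ} (h : Pn n (toothSeq m)) : n = m := by
  obtain ⟨N, hN⟩ := h
  obtain ⟨b, hb, hnode⟩ := hN (max N 1) (le_max_left _ _)
  have := node_inj hnode.symm
  omega
/-! ### Concatenation machinery -/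

def segIdx (len : ℕ → ℕ) : ℕ → ℕ × ℕ
  | 0 => (0, 0)
  | i + 1 =>
    let p := segIdx len i
    if p.2 + 1 < len p.1 then (p.1, p.2 + 1) else (p.1 + 1, 0)

def segOff (len : ℕ → ℕ) : ℕ → ℕ
  | 0 => 0
  | k + 1 => segOff len k + len k

variable {len : ℕ → ℕ}

lemma segIdx_lt (hlen : ∀ k, 1 ≤ len k) (i : ℕ) :
    (segIdx len i).2 < len (segIdx len i).1 := by
  induction i with
  | zero => exact hlen 0
  | succ j ih =>
    rw [segIdx]
    by_cases h : (segIdx len j).2 + 1 < len (segIdx len j).1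
    · simp [h]
    · simp only [h, if_neg, if_false]
      exact hlen _

lemma segIdx_inner (hlen : ∀ k, 1 ≤ len k) {m k : ℕ} (h : segIdx len m = (k, 0)) :
    ∀ j, j < len k → segIdx len (m + j) = (k, j) := by
  intro j
  induction j with
  | zero => intro _; simpa using h
  | succ i ih =>
    intro hj
    have hi := ih (by omega)
    rw [show m + (i+1) = (m + i) + 1 by omega, segIdx, hi]
    simp only
    rw [if_pos (by simpa using hj)]

lemma segIdx_off (hlen : ∀ k, 1 ≤ len k) : ∀ k, segIdx len (segOff len k) = (k, 0) := by
  intro k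
  induction k with
  | zero => rfl
  | succ n ih =>
    have hlast := segIdx_inner hlen ih (len n - 1) (by have := hlen n; omega)
    rw [segOff, show segOff len n + len n = (segOff len n + (len n - 1)) + 1 by
      have := hlen n; omega, segIdx, hlast]
    simp only
    rw [if_neg (by have := hlen n; omega)]

lemma segIdx_spec (hlen : ∀ k, 1 ≤ len k) (k j : ℕ) (hj : j < len k) :
    segIdx len (segOff len k + j) = (k, j) :=
  segIdx_inner hlen (segIdx_off hlen k) j hj

lemma segIdx_fst_mono (hlen : ∀ k, 1 ≤ len k) : Monotone (fun i => (segIdx len i).1) := by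
  apply monotone_nat_of_le_succ
  intro i
  rw [segIdx]
  by_cases h : (segIdx len i).2 + 1 < len (segIdx len i).1
  · simp [h]
  · simp [h]

lemma segOff_strictMono (hlen : ∀ k, 1 ≤ len k) : StrictMono (segOff len) := by
  apply strictMono_nat_of_lt_succ
  intro k
  rw [segOff]
  have := hlen k; omega

lemma segIdx_fst_large (hlen : ∀ k, 1 ≤ len k) {N i : ℕ} (h : segOff len N ≤ i) :
    N ≤ (segIdx len i).1 := by
  have h1 : (segIdx len (segOff len N)).1 ≤ (segIdx len i).1 := segIdx_fst_mono hlen h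
  rwa [segIdx_off hlen] at h1

def segW (len : ℕ → ℕ) (f : ℕ → ℕ → List ℕ) : ℕ → List ℕ :=
  fun i => f (segIdx len i).1 (segIdx len i).2

theorem merge_sigma (T' : Set (List ℕ)) (len : ℕ → ℕ) (f : ℕ → ℕ → List ℕ)
    (hlen : ∀ k, 1 ≤ len k)
    (hmem : ∀ k j, j < len k → f k j ∈ T')
    (hstep : ∀ k j, j + 1 < len k → treeDist (f k j) (f k (j+1)) ≤ 1)
    (hjoin : ∀ k, treeDist (f k (len k - 1)) (f (k+1) 0) ≤ 1)
    (hdiv : ∀ R : ℕ, ∃ N, ∀ k ≥ N, ∀ j < len k, R ≤ (f k j).length)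
    (s t : ℕ → List ℕ) (hs : IsCoarseSeqT T' s) (ht : IsCoarseSeqT T' t)
    (hhead : ∀ k, s k = f k 0)
    (q : ℕ → ℕ) (hq : ∀ k, q k < len k) (hpick : ∀ k, t k = f k (q k)) :
    SigmaRelT T' s t := by
  set w := segW len f with hw
  have hwcoarse : IsCoarseSeqT T' w := by
    refine ⟨fun i => hmem _ _ (segIdx_lt hlen i), ⟨1, fun i => ?_⟩, ?_⟩
    · have hlt := segIdx_lt hlen i
      have hd : treeDist (w i) (w (i+1)) ≤ 1 := by
        rw [hw, segW, segW, segIdx]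
        by_cases h : (segIdx len i).2 + 1 < len (segIdx len i).1
        · simp only [h, if_pos]
          exact hstep _ _ h
        · simp only [h, if_neg, if_false]
          have h2 : (segIdx len i).2 = len (segIdx len i).1 - 1 := by omega
          rw [h2]
          exact hjoin _
      exact_mod_cast hd
    · rw [tendsto_atTop]
      intro R
      obtain ⟨N, hN⟩ := hdiv R
      rw [eventually_atTop]
      refine ⟨segOff len N, fun i hi => ?_⟩
      rw [treeDist_nil]
      exact hN _ (segIdx_fst_large hlen hi) _ (segIdx_lt hlen i)
  have hsub_s : IsSubseq s w := by
    refine ⟨segOff len, segOff_strictMono hlen, fun k => ?_⟩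
    rw [hhead k, hw, segW, segIdx_off hlen k]
  have hsub_t : IsSubseq t w := by
    refine ⟨fun k => segOff len k + q k, ?_, fun k => ?_⟩
    · apply strictMono_nat_of_lt_succ
      intro k
      have h1 : segOff len k + q k < segOff len (k+1) := by
        rw [segOff]; have := hq k; omega
      omega
    · rw [hpick k, hw, segW, segIdx_spec hlen k (q k) (hq k)]
  refine ⟨2, fun i => if i = 0 then s else if i = 1 then w else t, rfl, rfl, ?_, ?_⟩
  · intro i hi
    interval_cases i <;> simpa using by first | exact hs | exact hwcoarse | exact ht
  · intro i hi
    interval_cases i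
    · left; simpa using hsub_s
    · right; simpa using hsub_t

/-- single-step sigma relation: t a coarse subsequence of s -/
lemma sigmaRel_of_subseq {T' : Set (List ℕ)} {s t : ℕ → List ℕ}
    (hs : IsCoarseSeqT T' s) (ht : IsCoarseSeqT T' t) (h : IsSubseq t s) :
    SigmaRelT T' s t := by
  refine ⟨1, fun i => if i = 0 then s else t, rfl, rfl, ?_, ?_⟩
  · intro i hi; interval_cases i <;> simpa using by first | exact hs | exact ht
  · intro i hi; interval_cases i
    right; simpa using h

lemma sigmaRel_trans {T' : Set (List ℕ)} {s t r : ℕ → List ℕ}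
    (h1 : SigmaRelT T' s t) (h2 : SigmaRelT T' t r) : SigmaRelT T' s r := by
  obtain ⟨n, u, hu0, hun, huc, hua⟩ := h1
  obtain ⟨m, v, hv0, hvm, hvc, hva⟩ := h2
  refine ⟨n + m, fun i => if i < n then u i else v (i - n), ?_, ?_, ?_, ?_⟩
  · show (if 0 < n then u 0 else v (0 - n)) = s
    by_cases h : 0 < n
    · rw [if_pos h]; exact hu0
    · rw [if_neg h, show (0:ℕ) - n = 0 by omega, hv0, ← hun, show n = 0 by omega]
      exact hu0
  · show (if n + m < n then u (n + m) else v (n + m - n)) = r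
    rw [if_neg (by omega), show n + m - n = m by omega]
    exact hvm
  · intro i hi
    show IsCoarseSeqT T' (if i < n then u i else v (i - n))
    by_cases h : i < n
    · rw [if_pos h]; exact huc i (by omega)
    · rw [if_neg h]; exact hvc (i - n) (by omega)
  · intro i hi
    show IsSubseq (if i < n then u i else v (i - n))
          (if i + 1 < n then u (i + 1) else v (i + 1 - n)) ∨
        IsSubseq (if i + 1 < n then u (i + 1) else v (i + 1 - n))
          (if i < n then u i else v (i - n))
    by_cases h : i + 1 < n
    · rw [if_pos h, if_pos (by omega)]
      exact hua i (by omega)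
    · by_cases h' : i < n
      · have hn : i + 1 = n := by omega
        have e2 : (if i + 1 < n then u (i + 1) else v (i + 1 - n)) = u (i + 1) := by
          rw [if_neg h, show i + 1 - n = 0 by omega, hv0, ← hun, hn]
        rw [e2, if_pos h']
        exact hua i (by omega)
      · rw [if_neg h, if_neg h', show i + 1 - n = i - n + 1 by omega]
        exact hva (i - n) (by omega)
/-! ### Case A: sequences on a fixed tooth -/

def aB (h : ℕ → ℕ) (k : ℕ) : ℕ := min (min (h k) (h (k+1))) k
def aA (h : ℕ → ℕ) (k : ℕ) : ℕ := max (max (h k) (h (k+1))) k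
def lenA (h : ℕ → ℕ) (k : ℕ) : ℕ :=
  (h k - aB h k) + (aA h k - aB h k) + (aA h k - h (k+1)) + 1
def gA (h : ℕ → ℕ) (k j : ℕ) : ℕ :=
  if j < h k - aB h k then h k - j
  else if j < (h k - aB h k) + (aA h k - aB h k) then aB h k + (j - (h k - aB h k))
  else aA h k - (j - ((h k - aB h k) + (aA h k - aB h k)))

lemma dist_le_one {x y x' y' : ℕ}
    (h : (x = x' ∧ (y - y') + (y' - y) ≤ 1) ∨ (y = 0 ∧ y' = 0 ∧ (x - x') + (x' - x) ≤ 1)) :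
    treeDist (node x y) (node x' y') ≤ 1 := by
  rw [treeDist_node]
  rcases h with ⟨h1, h2⟩ | ⟨h1, h2, h3⟩
  · rw [if_pos h1]; omega
  · by_cases hx : x = x'
    · rw [if_pos hx]; omega
    · rw [if_neg hx]; omega

set_option maxHeartbeats 1600000 in
lemma caseA (n : ℕ) (h : ℕ → ℕ) (hdivh : ∀ R : ℕ, ∃ N, ∀ k ≥ N, R ≤ h k)
    (hs : IsCoarseSeqT combT (fun k => node n (h k))) :
    SigmaRelT combT (fun k => node n (h k)) (toothSeq n) := by
  refine merge_sigma combT (lenA h) (fun k j => node n (gA h k j)) ?_ ?_ ?_ ?_ ?_ _ _ hs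
    (toothSeq_coarse n) ?_ (fun k => (h k - aB h k) + (k - aB h k)) ?_ ?_
  · intro k; simp only [lenA]; omega
  · intro k j _; exact node_mem _ _
  · intro k j hj
    apply dist_le_one
    left
    refine ⟨rfl, ?_⟩
    simp only [gA, lenA, aB, aA] at hj ⊢
    (repeat' (split_ifs <;> try simp only [*, if_true, if_false, not_false_eq_true, ↓reduceIte])) <;> omega
  · intro k
    show treeDist (node n (gA h k (lenA h k - 1))) (node n (gA h (k + 1) 0)) ≤ 1
    have h1 : gA h k (lenA h k - 1) = h (k+1) := by
      simp only [gA, lenA, aB, aA]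
      (repeat' (split_ifs <;> try simp only [*, if_true, if_false, not_false_eq_true, ↓reduceIte])) <;> omega
    have h2 : gA h (k+1) 0 = h (k+1) := by
      simp only [gA, lenA, aB, aA]
      (repeat' (split_ifs <;> try simp only [*, if_true, if_false, not_false_eq_true, ↓reduceIte])) <;> omega
    rw [h1, h2]
    apply dist_le_one; left; exact ⟨rfl, by omega⟩
  · intro R
    obtain ⟨N, hN⟩ := hdivh R
    refine ⟨max N R, fun k hk j hj => ?_⟩
    rw [node_length]
    have e1 := hN k (by omega)
    have e2 := hN (k+1) (by omega)
    simp only [gA, lenA, aB, aA] at hj ⊢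
    (repeat' (split_ifs <;> try simp only [*, if_true, if_false, not_false_eq_true, ↓reduceIte])) <;> omega
  · intro k
    show node n (h k) = node n (gA h k 0)
    have : gA h k 0 = h k := by
      simp only [gA, aB, aA]
      (repeat' (split_ifs <;> try simp only [*, if_true, if_false, not_false_eq_true, ↓reduceIte])) <;> omega
    rw [this]
  · intro k
    simp only [lenA, aB, aA]
    omega
  · intro k
    show node n k = node n (gA h k _)
    have : gA h k ((h k - aB h k) + (k - aB h k)) = k := by
      simp only [gA, aB, aA]
      (repeat' (split_ifs <;> try simp only [*, if_true, if_false, not_false_eq_true, ↓reduceIte])) <;> omega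
    rw [this]

/-! ### Case B: spine-recurrent sequences -/

def bB (a : ℕ → ℕ) (k : ℕ) : ℕ := min (min (a k) (a (k+1))) k
def bA (a : ℕ → ℕ) (k : ℕ) : ℕ := max (max (a k) (a (k+1))) k
def c1B (a b : ℕ → ℕ) (k : ℕ) : ℕ := b k
def c2B (a b : ℕ → ℕ) (k : ℕ) : ℕ := b k + (a k - bB a k)
def c3B (a b : ℕ → ℕ) (k : ℕ) : ℕ := c2B a b k + (bA a k - bB a k)
def c4B (a b : ℕ → ℕ) (k : ℕ) : ℕ := c3B a b k + (bA a k - a (k+1))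
def lenBB (a b : ℕ → ℕ) (k : ℕ) : ℕ := c4B a b k + b (k+1) + 1
def alB (a b : ℕ → ℕ) (k j : ℕ) : ℕ :=
  if j ≤ c1B a b k then a k
  else if j ≤ c2B a b k then a k - (j - c1B a b k)
  else if j ≤ c3B a b k then bB a k + (j - c2B a b k)
  else if j ≤ c4B a b k then bA a k - (j - c3B a b k)
  else a (k+1)
def beB (a b : ℕ → ℕ) (k j : ℕ) : ℕ :=
  if j ≤ c1B a b k then b k - j
  else if j ≤ c4B a b k then 0
  else j - c4B a b k

set_option maxHeartbeats 1600000 in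
lemma caseB (a b : ℕ → ℕ) (hdiva : ∀ R : ℕ, ∃ N, ∀ k ≥ N, R ≤ a k)
    (hs : IsCoarseSeqT combT (fun k => node (a k) (b k))) :
    SigmaRelT combT (fun k => node (a k) (b k)) spineSeq := by
  refine merge_sigma combT (lenBB a b) (fun k j => node (alB a b k j) (beB a b k j))
    ?_ ?_ ?_ ?_ ?_ _ _ hs spineSeq_coarse ?_
    (fun k => b k + (a k - bB a k) + (k - bB a k)) ?_ ?_
  · intro k; simp only [lenBB]; omega
  · intro k j _; exact node_mem _ _
  · intro k j hj
    apply dist_le_one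
    simp only [lenBB, c4B, c3B, c2B, c1B, bB, bA] at hj
    unfold alB beB c4B c3B c2B c1B bB bA
    split_ifs <;> omega
  · intro k
    show treeDist (node (alB a b k (lenBB a b k - 1)) (beB a b k (lenBB a b k - 1)))
      (node (alB a b (k+1) 0) (beB a b (k+1) 0)) ≤ 1
    have h1 : alB a b k (lenBB a b k - 1) = a (k+1) ∧ beB a b k (lenBB a b k - 1) = b (k+1) := by
      unfold alB beB lenBB c4B c3B c2B c1B bB bA
      split_ifs <;> omega
    have h2 : alB a b (k+1) 0 = a (k+1) ∧ beB a b (k+1) 0 = b (k+1) := by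
      unfold alB beB c4B c3B c2B c1B bB bA
      split_ifs <;> omega
    rw [h1.1, h1.2, h2.1, h2.2]
    apply dist_le_one; left; exact ⟨rfl, by omega⟩
  · intro R
    obtain ⟨N, hN⟩ := hdiva R
    refine ⟨max N R, fun k hk j hj => ?_⟩
    rw [node_length]
    have e1 := hN k (by omega)
    have e2 := hN (k+1) (by omega)
    simp only [lenBB, c4B, c3B, c2B, c1B, bB, bA] at hj
    unfold alB beB c4B c3B c2B c1B bB bA
    split_ifs <;> omega
  · intro k
    show node (a k) (b k) = node (alB a b k 0) (beB a b k 0)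
    have h2 : alB a b k 0 = a k ∧ beB a b k 0 = b k := by
      unfold alB beB c4B c3B c2B c1B bB bA
      split_ifs <;> omega
    rw [h2.1, h2.2]
  · intro k
    simp only [lenBB, c4B, c3B, c2B, c1B, bB, bA]
    omega
  · intro k
    show node k 0 = node (alB a b k _) (beB a b k _)
    have h2 : alB a b k (b k + (a k - bB a k) + (k - bB a k)) = k ∧
        beB a b k (b k + (a k - bB a k) + (k - bB a k)) = 0 := by
      unfold alB beB c4B c3B c2B c1B bB bA
      split_ifs <;> omega
    rw [h2.1, h2.2]
/-! ### Classification -/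

lemma tail_coarse {T' : Set (List ℕ)} {s : ℕ → List ℕ} (hs : IsCoarseSeqT T' s) (N : ℕ) :
    IsCoarseSeqT T' (fun k => s (N + k)) := by
  obtain ⟨Kr, hK⟩ := hs.2.1
  refine ⟨fun i => hs.1 _, ⟨Kr, fun i => hK (N + i)⟩, ?_⟩
  exact hs.2.2.comp (by simpa [Nat.add_comm] using tendsto_add_atTop_nat N)

lemma classify (s : ℕ → List ℕ) (hs : IsCoarseSeqT combT s) :
    (∃ n, SigmaRelT combT s (toothSeq n)) ∨ SigmaRelT combT s spineSeq := by
  choose a b hab using fun i => mem_combT (hs.1 i)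
  obtain ⟨K, hK⟩ := coarse_nat_bound hs
  have hlen : ∀ i, (s i).length = a i + b i := fun i => by rw [hab i, node_length]
  by_cases hA : ∃ N, ∀ i ≥ N, a i = a N
  · obtain ⟨N, hN⟩ := hA
    left
    refine ⟨a N, ?_⟩
    have hseq : ∀ k, s (N + k) = node (a N) (b (N + k)) := by
      intro k
      rw [hab (N + k), hN (N + k) (by omega)]
    have htail := tail_coarse hs N
    have hfun : (fun k => s (N + k)) = (fun k => node (a N) (b (N + k))) :=
      funext fun k => hseq k
    rw [hfun] at htail
    have hdivh : ∀ R : ℕ, ∃ M, ∀ k ≥ M, R ≤ b (N + k) := by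
      intro R
      obtain ⟨M, hM⟩ := coarse_depth hs (a N + R)
      refine ⟨M, fun k hk => ?_⟩
      have h1 := hM (N + k) (by omega)
      have h2 := hlen (N + k)
      have h3 := hN (N + k) (by omega)
      omega
    have h2 : SigmaRelT combT (fun k => node (a N) (b (N + k))) (toothSeq (a N)) :=
      caseA (a N) (fun k => b (N + k)) hdivh htail
    have h1 : SigmaRelT combT s (fun k => node (a N) (b (N + k))) := by
      refine sigmaRel_of_subseq hs htail ⟨fun k => N + k, fun i j hij => by show N + i < N + j; omega, ?_⟩
      intro i
      exact (hseq i).symm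
    exact sigmaRel_trans h1 h2
  · right
    push_neg at hA
    have hchange : ∀ N, ∃ j, N ≤ j ∧ a j ≠ a (j + 1) := by
      intro N
      obtain ⟨i, hiN, hne⟩ := hA N
      by_contra hcon
      push_neg at hcon
      have hconst : ∀ d, a (N + d) = a N := by
        intro d
        induction d with
        | zero => rfl
        | succ e ih =>
          have := hcon (N + e) (by omega)
          rw [show N + (e + 1) = (N + e) + 1 by omega, ← this, ih]
      have := hconst (i - N)
      rw [show N + (i - N) = i by omega] at this
      exact hne this
    have hdiva : ∀ R : ℕ, ∃ M, ∀ i ≥ M, R ≤ a i := by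
      intro R
      obtain ⟨M, hM⟩ := coarse_depth hs (R + K + 1)
      refine ⟨M, fun i hi => ?_⟩
      have hex : ∃ j, i ≤ j ∧ a j ≠ a (j + 1) := hchange i
      set j₀ := Nat.find hex with hj₀
      obtain ⟨hij₀, hne₀⟩ := Nat.find_spec hex
      have hconst : ∀ d, i + d ≤ j₀ → a (i + d) = a i := by
        intro d
        induction d with
        | zero => intro _; rfl
        | succ e ih =>
          intro hd
          have hlt : i + e < j₀ := by omega
          have hmin := Nat.find_min hex hlt
          push_neg at hmin
          have heq := hmin (by omega)
          rw [show i + (e + 1) = (i + e) + 1 by omega, ← heq, ih (by omega)]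
      have haj : a j₀ = a i := by
        have := hconst (j₀ - i) (by omega)
        rwa [show i + (j₀ - i) = j₀ by omega] at this
      have hdist := hK j₀
      rw [hab j₀, hab (j₀ + 1), treeDist_node, if_neg hne₀] at hdist
      have hdep := hM j₀ (by omega)
      have := hlen j₀
      omega
    have hfun : s = fun k => node (a k) (b k) := funext hab
    rw [hfun]
    have hs' : IsCoarseSeqT combT (fun k => node (a k) (b k)) := hfun ▸ hs
    exact caseB a b hdiva hs'
/-! ### Final assembly -/

def gfun : ℕ → SigmaQuotT combT
  | 0 => Quot.mk _ ⟨spineSeq, spineSeq_coarse⟩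
  | n + 1 => Quot.mk _ ⟨toothSeq n, toothSeq_coarse n⟩

lemma gfun_surj : Function.Surjective gfun := by
  intro x
  induction x using Quot.ind with
  | _ s =>
    rcases classify s.1 s.2 with ⟨n, hrel⟩ | hrel
    · exact ⟨n + 1, (Quot.sound (r := fun s t : CoarseSeqT combT => SigmaRelT combT s.1 t.1)
        (a := s) (b := ⟨toothSeq n, toothSeq_coarse n⟩) hrel).symm⟩
    · exact ⟨0, (Quot.sound (r := fun s t : CoarseSeqT combT => SigmaRelT combT s.1 t.1)
        (a := s) (b := ⟨spineSeq, spineSeq_coarse⟩) hrel).symm⟩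

lemma gfun_inj_aux {n : ℕ} {x y : CoarseSeqT combT}
    (h : Relation.EqvGen (fun s t : CoarseSeqT combT => SigmaRelT combT s.1 t.1) x y) :
    Pn n x.1 ↔ Pn n y.1 := by
  induction h with
  | rel _ _ hr => exact Pn_sigmaRel hr
  | refl => exact Iff.rfl
  | symm _ _ _ ih => exact ih.symm
  | trans _ _ _ _ _ ih1 ih2 => exact ih1.trans ih2

theorem sigmaQuot_comb_tree_aleph0' :
    Cardinal.mk (SigmaQuotT combT) = Cardinal.aleph0 := by
  apply le_antisymm
  · have : Countable (SigmaQuotT combT) := gfun_surj.countable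
    exact Cardinal.mk_le_aleph0
  · have hinj : Function.Injective (fun n => gfun (n + 1)) := by
      intro n m h
      simp only [gfun] at h
      have := Quot.eq.mp h
      have hP := (gfun_inj_aux (n := n) this).mp (Pn_toothSeq n)
      exact Pn_toothSeq_iff hP
    rw [← Cardinal.mk_nat]
    exact Cardinal.mk_le_of_injective hinj

/-- for the tree `T = {0ⁿ1ᵐ : n, m ∈ ℕ}`, the set `σ(T, root)` is
countably infinite, i.e. it has cardinality `ℵ₀`. -/
theorem sigmaQuot_comb_tree_aleph0 :
    Cardinal.mk (SigmaQuotT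
      {l : List ℕ | ∃ n m : ℕ, l = List.replicate n 0 ++ List.replicate m 1}) =
      Cardinal.aleph0 := by
  exact sigmaQuot_comb_tree_aleph0'
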